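/- Let U and Û be real n×k matrices with orthonormal columns (U^T U = Û^T Û = I_k), and let W_U ∈ O(k) be the orthogonal polar factor of U^T Û, i.e., the orthogonal matrix minimizing ‖U^T Û − W‖_F over W ∈ O(k). Then ‖U^T Û − W_U‖_op ≤ ‖Û Û^T − U U^T‖_op^2, where ‖·‖_op denotes the spectral (operator) norm. -/

import Mathlib

open Matrix

/-- The spectral (ℓ2 → ℓ2 operator) norm of a real matrix, i.e. its largest singular value. -/
noncomputable def opNorm {a b : ℕ} (M : Matrix (Fin a) (Fin b) ℝ) : ℝ :=
  ‖LinearMap.toContinuousLinearMap (Matrix.toEuclideanLin M)‖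

/-- Squared Frobenius norm of a matrix. -/
def frobSq {a b : ℕ} (M : Matrix (Fin a) (Fin b) ℝ) : ℝ :=
  ∑ i : Fin a, ∑ j : Fin b, (M i j) ^ 2

/-! ### Auxiliary lemmas -/

lemma polarAux_norm_symm_sq {m : ℕ} (x : Fin m → ℝ) :
    ‖(WithLp.equiv 2 (Fin m → ℝ)).symm x‖ ^ 2 = x ⬝ᵥ x := by
  rw [EuclideanSpace.real_norm_sq_eq]
  simp [dotProduct, sq]

lemma polarAux_apply_le_opNorm {a b : ℕ} (M : Matrix (Fin a) (Fin b) ℝ) (v : Fin b → ℝ) :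
    (M *ᵥ v) ⬝ᵥ (M *ᵥ v) ≤ opNorm M ^ 2 * (v ⬝ᵥ v) := by
  have h := ContinuousLinearMap.le_opNorm
    (LinearMap.toContinuousLinearMap (Matrix.toEuclideanLin M))
    ((WithLp.equiv 2 (Fin b → ℝ)).symm v)
  rw [LinearMap.coe_toContinuousLinearMap'] at h
  replace h : ‖(WithLp.equiv 2 (Fin a → ℝ)).symm (M *ᵥ v)‖ ≤
      ‖LinearMap.toContinuousLinearMap (toEuclideanLin M)‖ * ‖(WithLp.equiv 2 (Fin b → ℝ)).symm v‖ :=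
    h
  have h1 := polarAux_norm_symm_sq (M *ᵥ v)
  have h2 := polarAux_norm_symm_sq v
  have hn1 : (0:ℝ) ≤ ‖(WithLp.equiv 2 (Fin a → ℝ)).symm (M *ᵥ v)‖ := norm_nonneg _
  have hn2 : (0:ℝ) ≤ ‖(WithLp.equiv 2 (Fin b → ℝ)).symm v‖ := norm_nonneg _
  have hop : (0:ℝ) ≤ opNorm M := norm_nonneg _
  rw [← h1, ← h2]
  unfold opNorm
  nlinarith [h, hn1, hn2, hop]

lemma polarAux_opNorm_le_bound {a b : ℕ} (M : Matrix (Fin a) (Fin b) ℝ) {c : ℝ} (hc : 0 ≤ c)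
    (h : ∀ v : Fin b → ℝ, (M *ᵥ v) ⬝ᵥ (M *ᵥ v) ≤ c ^ 2 * (v ⬝ᵥ v)) : opNorm M ≤ c := by
  apply ContinuousLinearMap.opNorm_le_bound _ hc
  intro x
  have key := h (WithLp.equiv 2 (Fin b → ℝ) x)
  have hx : (WithLp.equiv 2 (Fin b → ℝ)).symm ((WithLp.equiv 2 (Fin b → ℝ)) x) = x :=
    (WithLp.equiv 2 (Fin b → ℝ)).symm_apply_apply x
  have happ : (LinearMap.toContinuousLinearMap (Matrix.toEuclideanLin M)) x
      = (WithLp.equiv 2 (Fin a → ℝ)).symm (M *ᵥ (WithLp.equiv 2 (Fin b → ℝ) x)) := by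
    rw [LinearMap.coe_toContinuousLinearMap', Matrix.toEuclideanLin_apply]
    rfl
  rw [happ]
  have h1 := polarAux_norm_symm_sq (M *ᵥ (WithLp.equiv 2 (Fin b → ℝ) x))
  have h2 := polarAux_norm_symm_sq ((WithLp.equiv 2 (Fin b → ℝ)) x)
  rw [hx] at h2
  have hn1 : (0:ℝ) ≤ ‖(WithLp.equiv 2 (Fin a → ℝ)).symm (M *ᵥ (WithLp.equiv 2 (Fin b → ℝ) x))‖ :=
    norm_nonneg _
  have hn2 : (0:ℝ) ≤ ‖x‖ := norm_nonneg _
  nlinarith [key, h1, h2, hn1, hn2, mul_nonneg hc hn2]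

lemma polarAux_dot_mulVec_left {a b : ℕ} (M : Matrix (Fin a) (Fin b) ℝ) (x : Fin b → ℝ)
    (y : Fin a → ℝ) : (M *ᵥ x) ⬝ᵥ y = x ⬝ᵥ (Mᵀ *ᵥ y) := by
  rw [dotProduct_comm, dotProduct_mulVec, ← mulVec_transpose, dotProduct_comm]

lemma polarAux_dot_self_nonneg {m : ℕ} (x : Fin m → ℝ) : 0 ≤ x ⬝ᵥ x :=
  Finset.sum_nonneg fun i _ => mul_self_nonneg (x i)

lemma polarAux_dot_sq_le {m : ℕ} (x y : Fin m → ℝ) :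
    (x ⬝ᵥ y) ^ 2 ≤ (x ⬝ᵥ x) * (y ⬝ᵥ y) := by
  simpa [dotProduct, sq] using Finset.sum_mul_sq_le_sq_mul_sq Finset.univ x y

lemma polarAux_orth_dot {p q : ℕ} (V : Matrix (Fin p) (Fin q) ℝ) (h : Vᵀ * V = 1)
    (x : Fin q → ℝ) : (V *ᵥ x) ⬝ᵥ (V *ᵥ x) = x ⬝ᵥ x := by
  rw [polarAux_dot_mulVec_left, mulVec_mulVec, h, one_mulVec]

lemma polarAux_frobSq_sub {p q : ℕ} (X W : Matrix (Fin p) (Fin q) ℝ) :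
    frobSq (X - W) = frobSq X - 2 * trace (Xᵀ * W) + frobSq W := by
  have htr : trace (Xᵀ * W) = ∑ i : Fin p, ∑ j : Fin q, X i j * W i j := by
    simp only [Matrix.trace, Matrix.diag, Matrix.mul_apply, Matrix.transpose_apply]
    exact Finset.sum_comm
  rw [htr]
  simp only [frobSq, Matrix.sub_apply]
  rw [Finset.mul_sum, ← Finset.sum_sub_distrib, ← Finset.sum_add_distrib]
  apply Finset.sum_congr rfl; intro i _
  rw [Finset.mul_sum, ← Finset.sum_sub_distrib, ← Finset.sum_add_distrib]
  apply Finset.sum_congr rfl; intro j _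
  ring

lemma polarAux_frobSq_orth {p : ℕ} (W : Matrix (Fin p) (Fin p) ℝ) (h : Wᵀ * W = 1) :
    frobSq W = p := by
  have := congrArg Matrix.trace h
  rw [Matrix.trace_one] at this
  simp only [Matrix.trace, Matrix.diag, Matrix.mul_apply, Matrix.transpose_apply] at this
  simp only [frobSq, sq]
  rw [Finset.sum_comm]
  simpa using this

lemma polarAux_trace_stdBasisMatrix_mul {p : ℕ} (i j : Fin p) (c : ℝ)
    (B : Matrix (Fin p) (Fin p) ℝ) : trace (Matrix.single i j c * B) = c * B j i := by
  simp [Matrix.trace, Matrix.diag, Matrix.mul_apply, Matrix.single, ite_and,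
    Finset.sum_ite_eq, Finset.sum_ite_eq']

/-- Givens rotation. -/
def polarGiv {p : ℕ} (i j : Fin p) (c s : ℝ) : Matrix (Fin p) (Fin p) ℝ :=
  1 + Matrix.single i i (c-1) + Matrix.single j j (c-1) + Matrix.single i j s
    + Matrix.single j i (-s)

lemma polarGiv_orth {p : ℕ} (i j : Fin p) (hij : i ≠ j) {c s : ℝ} (h : c^2 + s^2 = 1) :
    (polarGiv i j c s)ᵀ * polarGiv i j c s = 1 := by
  ext a b
  simp only [polarGiv, Matrix.mul_apply, Matrix.transpose_apply, Matrix.add_apply,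
    Matrix.one_apply, Matrix.single, Matrix.of_apply, ite_and, mul_add, add_mul,
    Finset.sum_add_distrib]
  simp only [mul_ite, ite_mul, mul_zero, zero_mul, mul_one, one_mul, Finset.sum_ite_eq,
    Finset.sum_ite_eq', Finset.mem_univ, if_true]
  by_cases hai : a = i <;> by_cases haj : a = j <;> by_cases hbi : b = i <;>
    by_cases hbj : b = j <;> simp_all [eq_comm]
  all_goals linarith [h]

lemma polarAux_trace_mul_giv {p : ℕ} (C : Matrix (Fin p) (Fin p) ℝ) (i j : Fin p) (c s : ℝ) :
    trace (C * polarGiv i j c s)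
      = trace C + (c-1) * C i i + (c-1) * C j j + s * C j i + (-s) * C i j := by
  simp only [polarGiv, mul_add, trace_add, mul_one]
  rw [trace_mul_comm C (Matrix.single i i (c-1)),
    trace_mul_comm C (Matrix.single j j (c-1)),
    trace_mul_comm C (Matrix.single i j s),
    trace_mul_comm C (Matrix.single j i (-s))]
  rw [polarAux_trace_stdBasisMatrix_mul, polarAux_trace_stdBasisMatrix_mul,
    polarAux_trace_stdBasisMatrix_mul, polarAux_trace_stdBasisMatrix_mul]

/-- Householder reflection. -/
noncomputable def polarRefl {p : ℕ} (v : Fin p → ℝ) : Matrix (Fin p) (Fin p) ℝ :=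
  1 - (2 * (v ⬝ᵥ v)⁻¹) • vecMulVec v v

lemma polarAux_vecMulVec_transpose {p : ℕ} (v : Fin p → ℝ) :
    (vecMulVec v v)ᵀ = vecMulVec v v := by
  ext a b; simp [vecMulVec_apply, mul_comm]

lemma polarAux_vecMulVec_sq {p : ℕ} (v : Fin p → ℝ) :
    vecMulVec v v * vecMulVec v v = (v ⬝ᵥ v) • vecMulVec v v := by
  ext a b
  simp only [Matrix.mul_apply, vecMulVec_apply, Matrix.smul_apply, dotProduct, smul_eq_mul,
    Finset.sum_mul]
  apply Finset.sum_congr rfl; intro r _; ring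

lemma polarRefl_transpose {p : ℕ} (v : Fin p → ℝ) : (polarRefl v)ᵀ = polarRefl v := by
  simp [polarRefl, transpose_sub, transpose_smul, polarAux_vecMulVec_transpose]

lemma polarRefl_orth {p : ℕ} (v : Fin p → ℝ) (hv : v ≠ 0) :
    (polarRefl v)ᵀ * polarRefl v = 1 := by
  rw [polarRefl_transpose]
  have hvv : v ⬝ᵥ v ≠ 0 := fun hc => hv (dotProduct_self_eq_zero.mp hc)
  simp only [polarRefl, sub_mul, mul_sub, one_mul, mul_one, Matrix.smul_mul, Matrix.mul_smul,
    polarAux_vecMulVec_sq]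
  have hco : 2 * (v ⬝ᵥ v)⁻¹ * (2 * (v ⬝ᵥ v)⁻¹) * (v ⬝ᵥ v)
      = 2 * (v ⬝ᵥ v)⁻¹ + 2 * (v ⬝ᵥ v)⁻¹ := by field_simp; ring
  rw [smul_smul, smul_smul, hco, add_smul]
  abel

lemma polarAux_trace_mul_refl {p : ℕ} (C : Matrix (Fin p) (Fin p) ℝ) (v : Fin p → ℝ) :
    trace (C * polarRefl v) = trace C - 2 * (v ⬝ᵥ v)⁻¹ * ((C *ᵥ v) ⬝ᵥ v) := by
  have htr : trace (C * vecMulVec v v) = (C *ᵥ v) ⬝ᵥ v := by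
    simp [Matrix.trace, Matrix.diag, Matrix.mul_apply, Matrix.vecMulVec_apply, dotProduct,
      Matrix.mulVec, Finset.sum_mul, Finset.mul_sum, mul_comm, mul_left_comm]
  simp only [polarRefl, mul_sub, mul_one, Matrix.mul_smul, trace_sub, trace_smul, htr,
    smul_eq_mul]

lemma polarAux_scalar_givens {α β : ℝ}
    (h : ∀ c s : ℝ, c^2 + s^2 = 1 → (c-1)*α + s*β ≤ 0) : β = 0 := by
  by_contra hb
  have hpos : (0:ℝ) < α^2 + β^2 := by positivity
  set r := Real.sqrt (α^2 + β^2) with hrdef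
  have hr : 0 < r := Real.sqrt_pos.mpr hpos
  have hr2 : r^2 = α^2 + β^2 := Real.sq_sqrt (le_of_lt hpos)
  have hcs : (α/r)^2 + (β/r)^2 = 1 := by
    field_simp
    linarith [hr2]
  have h1 := h (α/r) (β/r) hcs
  have h3 : ((α/r - 1)*α + (β/r)*β) * r ≤ 0 := mul_nonpos_of_nonpos_of_nonneg h1 (le_of_lt hr)
  have h4 : (α/r)*r = α := by field_simp
  have h5 : (β/r)*r = β := by field_simp
  have h6 : α^2 + β^2 - α*r ≤ 0 := by nlinarith [h3, h4, h5]
  have hb2 : (0:ℝ) < β^2 := by positivity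
  nlinarith [hr2, hr, h6, hb2, sq_nonneg (r - α)]

lemma polarAux_psd_cs {p : ℕ} (N : Matrix (Fin p) (Fin p) ℝ) (hsym : Nᵀ = N)
    (hpsd : ∀ v : Fin p → ℝ, 0 ≤ (N *ᵥ v) ⬝ᵥ v) (x y : Fin p → ℝ) :
    ((N *ᵥ x) ⬝ᵥ y)^2 ≤ ((N *ᵥ x) ⬝ᵥ x) * ((N *ᵥ y) ⬝ᵥ y) := by
  have hswap : (N *ᵥ y) ⬝ᵥ x = (N *ᵥ x) ⬝ᵥ y := by
    rw [polarAux_dot_mulVec_left, hsym, dotProduct_comm]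
  have key : ∀ t : ℝ, 0 ≤ ((N *ᵥ y) ⬝ᵥ y) * (t*t) + (2*((N *ᵥ x) ⬝ᵥ y)) * t
      + ((N *ᵥ x) ⬝ᵥ x) := by
    intro t
    have h0 := hpsd (x + t • y)
    simp only [mulVec_add, mulVec_smul, add_dotProduct, dotProduct_add, smul_dotProduct,
      dotProduct_smul, smul_eq_mul] at h0
    rw [hswap] at h0
    nlinarith [h0]
  have hd := discrim_le_zero key
  rw [discrim] at hd
  nlinarith [hd]

theorem polar_factor_alignment_bound
    (n k : ℕ) (U Uhat : Matrix (Fin n) (Fin k) ℝ)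
    (hU : Uᵀ * U = 1) (hUhat : Uhatᵀ * Uhat = 1)
    (WU : Matrix (Fin k) (Fin k) ℝ)
    (hWUorth : WU * WUᵀ = 1 ∧ WUᵀ * WU = 1)
    (hWUmin : ∀ W : Matrix (Fin k) (Fin k) ℝ, W * Wᵀ = 1 ∧ Wᵀ * W = 1 →
      frobSq (Uᵀ * Uhat - WU) ≤ frobSq (Uᵀ * Uhat - W)) :
    opNorm (Uᵀ * Uhat - WU) ≤ opNorm (Uhat * Uhatᵀ - U * Uᵀ) ^ 2 := by
  set M : Matrix (Fin k) (Fin k) ℝ := Uᵀ * Uhat with hM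
  set A : Matrix (Fin k) (Fin k) ℝ := WUᵀ * M with hA
  set C : Matrix (Fin k) (Fin k) ℝ := Mᵀ * WU with hC
  set ε : ℝ := opNorm (Uhat * Uhatᵀ - U * Uᵀ) with hε
  -- trace maximality
  have htr : ∀ W : Matrix (Fin k) (Fin k) ℝ, W * Wᵀ = 1 ∧ Wᵀ * W = 1 →
      trace (Mᵀ * W) ≤ trace C := by
    intro W hW
    have h := hWUmin W hW
    rw [polarAux_frobSq_sub, polarAux_frobSq_sub, polarAux_frobSq_orth W hW.2,
      polarAux_frobSq_orth WU hWUorth.2] at h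
    rw [hC]
    linarith
  -- symmetry of C
  have hCsym : Cᵀ = C := by
    ext a b
    rw [Matrix.transpose_apply]
    rcases eq_or_ne b a with hab | hab
    · rw [hab]
    · have hkey : ∀ c s : ℝ, c^2 + s^2 = 1 → (c-1)*(C b b + C a a) + s*(C a b - C b a) ≤ 0 := by
        intro c s hcs
        have hGo : (polarGiv b a c s)ᵀ * polarGiv b a c s = 1 := polarGiv_orth b a hab hcs
        have hWo : (WU * polarGiv b a c s)ᵀ * (WU * polarGiv b a c s) = 1 := by
          rw [Matrix.transpose_mul, Matrix.mul_assoc, ← Matrix.mul_assoc WUᵀ WU,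
            hWUorth.2, Matrix.one_mul, hGo]
        have hcond := htr (WU * polarGiv b a c s) ⟨mul_eq_one_comm.mp hWo, hWo⟩
        rw [← Matrix.mul_assoc, ← hC, polarAux_trace_mul_giv] at hcond
        linarith
      have hβ := polarAux_scalar_givens hkey
      linarith [hβ]
  -- A = C and A symmetric
  have hAC : A = C := by
    rw [hA, ← hCsym, hC, Matrix.transpose_mul, Matrix.transpose_transpose]
  have hAsym : Aᵀ = A := by rw [hAC, hCsym]
  -- PSD of A
  have hApsd : ∀ v : Fin k → ℝ, 0 ≤ (A *ᵥ v) ⬝ᵥ v := by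
    intro v
    rcases eq_or_ne v 0 with hv | hv
    · simp [hv]
    · have hRo : (polarRefl v)ᵀ * polarRefl v = 1 := polarRefl_orth v hv
      have hWo : (WU * polarRefl v)ᵀ * (WU * polarRefl v) = 1 := by
        rw [Matrix.transpose_mul, Matrix.mul_assoc, ← Matrix.mul_assoc WUᵀ WU,
          hWUorth.2, Matrix.one_mul, hRo]
      have hcond := htr (WU * polarRefl v) ⟨mul_eq_one_comm.mp hWo, hWo⟩
      rw [← Matrix.mul_assoc, ← hC, polarAux_trace_mul_refl] at hcond
      have hvv : 0 < v ⬝ᵥ v :=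
        lt_of_le_of_ne (polarAux_dot_self_nonneg v)
          (fun hc => hv (dotProduct_self_eq_zero.mp hc.symm))
      have hinv : 0 < (v ⬝ᵥ v)⁻¹ := inv_pos.mpr hvv
      rw [hAC]
      nlinarith [hcond, hinv]
  -- norm preservation facts
  have hWUt : WUᵀᵀ * WUᵀ = 1 := by rw [Matrix.transpose_transpose, hWUorth.1]
  have hAA : ∀ v : Fin k → ℝ, (A *ᵥ v) ⬝ᵥ (A *ᵥ v) = (M *ᵥ v) ⬝ᵥ (M *ᵥ v) := by
    intro v
    rw [hA, ← mulVec_mulVec, polarAux_orth_dot WUᵀ hWUt]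
  -- the central geometric estimates
  have hgeo : ∀ v : Fin k → ℝ,
      (M *ᵥ v) ⬝ᵥ (M *ᵥ v) ≤ v ⬝ᵥ v ∧
      v ⬝ᵥ v - (M *ᵥ v) ⬝ᵥ (M *ᵥ v) ≤ ε^2 * (v ⬝ᵥ v) := by
    intro v
    set y : Fin n → ℝ := Uhat *ᵥ v with hy
    have hyy : y ⬝ᵥ y = v ⬝ᵥ v := polarAux_orth_dot Uhat hUhat v
    set P : Matrix (Fin n) (Fin n) ℝ := U * Uᵀ with hP
    have hPsq : P * P = P := by
      rw [hP, Matrix.mul_assoc, ← Matrix.mul_assoc Uᵀ U Uᵀ, hU, Matrix.one_mul]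
    have hPt : Pᵀ = P := by rw [hP, Matrix.transpose_mul, Matrix.transpose_transpose]
    have hMvMv : (M *ᵥ v) ⬝ᵥ (M *ᵥ v) = (P *ᵥ y) ⬝ᵥ y := by
      rw [hM, ← mulVec_mulVec, ← hy, polarAux_dot_mulVec_left, Matrix.transpose_transpose,
        mulVec_mulVec, ← hP, dotProduct_comm]
    have hPyy : (P *ᵥ y) ⬝ᵥ (P *ᵥ y) = (P *ᵥ y) ⬝ᵥ y := by
      rw [polarAux_dot_mulVec_left, hPt, mulVec_mulVec, hPsq, dotProduct_comm]
    set z : Fin n → ℝ := y - P *ᵥ y with hz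
    have hzz : z ⬝ᵥ z = y ⬝ᵥ y - (P *ᵥ y) ⬝ᵥ y := by
      rw [hz]
      rw [sub_dotProduct, dotProduct_sub, dotProduct_sub, hPyy]
      rw [dotProduct_comm y (P *ᵥ y)]
      ring
    constructor
    · have h0 : 0 ≤ z ⬝ᵥ z := polarAux_dot_self_nonneg z
      rw [hzz] at h0
      rw [hMvMv]
      linarith [hyy, h0]
    · have hPhaty : (Uhat * Uhatᵀ) *ᵥ y = y := by
        rw [hy, mulVec_mulVec, Matrix.mul_assoc, hUhat, Matrix.mul_one]
      have hzPP : z = (Uhat * Uhatᵀ - P) *ᵥ y := by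
        rw [sub_mulVec, hPhaty, hz]
      have hb := polarAux_apply_le_opNorm (Uhat * Uhatᵀ - P) y
      rw [← hzPP] at hb
      rw [hMvMv, ← hyy, ← hzz]
      calc z ⬝ᵥ z ≤ opNorm (Uhat * Uhatᵀ - P) ^ 2 * (y ⬝ᵥ y) := hb
        _ = ε^2 * (y ⬝ᵥ y) := by rw [hε, hP]
  -- A is a contraction on quadratic forms
  have hAle : ∀ v : Fin k → ℝ, (A *ᵥ v) ⬝ᵥ v ≤ v ⬝ᵥ v := by
    intro v
    have h1 := polarAux_dot_sq_le (A *ᵥ v) v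
    have h2 := (hgeo v).1
    have h3 := hAA v
    have h4 := hApsd v
    have h5 := polarAux_dot_self_nonneg v
    nlinarith [h1, h2, h3, h4, h5]
  -- ‖Av‖² ≤ ⟨Av, v⟩
  have hAsq : ∀ v : Fin k → ℝ, (A *ᵥ v) ⬝ᵥ (A *ᵥ v) ≤ (A *ᵥ v) ⬝ᵥ v := by
    intro v
    have hcs := polarAux_psd_cs A hAsym hApsd v (A *ᵥ v)
    have h7 := hAle (A *ᵥ v)
    have h4 := hApsd v
    have h4' := hApsd (A *ᵥ v)
    have hu : 0 ≤ (A *ᵥ v) ⬝ᵥ (A *ᵥ v) := polarAux_dot_self_nonneg _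
    nlinarith [hcs, h7, h4, h4', hu]
  -- B := 1 - A
  set B : Matrix (Fin k) (Fin k) ℝ := 1 - A with hB
  have hBapp : ∀ v : Fin k → ℝ, B *ᵥ v = v - A *ᵥ v := by
    intro v; rw [hB, sub_mulVec, one_mulVec]
  have hBsym : Bᵀ = B := by rw [hB, Matrix.transpose_sub, Matrix.transpose_one, hAsym]
  have hBpsd : ∀ v : Fin k → ℝ, 0 ≤ (B *ᵥ v) ⬝ᵥ v := by
    intro v
    rw [hBapp, sub_dotProduct]
    linarith [hAle v]
  have hBray : ∀ v : Fin k → ℝ, (B *ᵥ v) ⬝ᵥ v ≤ ε^2 * (v ⬝ᵥ v) := by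
    intro v
    rw [hBapp, sub_dotProduct]
    have h1 := hAsq v
    have h2 := hAA v
    have h3 := (hgeo v).2
    linarith
  -- final norm bound on B
  have hBnorm : ∀ v : Fin k → ℝ, (B *ᵥ v) ⬝ᵥ (B *ᵥ v) ≤ (ε^2)^2 * (v ⬝ᵥ v) := by
    intro v
    have hcs := polarAux_psd_cs B hBsym hBpsd v (B *ᵥ v)
    have h1 := hBray v
    have h2 := hBray (B *ᵥ v)
    have hu : 0 ≤ (B *ᵥ v) ⬝ᵥ (B *ᵥ v) := polarAux_dot_self_nonneg _
    have hK : 0 ≤ (ε^2)^2 * (v ⬝ᵥ v) :=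
      mul_nonneg (sq_nonneg _) (polarAux_dot_self_nonneg v)
    by_cases hcase : (B *ᵥ v) ⬝ᵥ (B *ᵥ v) ≤ (ε^2)^2 * (v ⬝ᵥ v)
    · exact hcase
    · push_neg at hcase
      have hvv := polarAux_dot_self_nonneg v
      have hs : 0 ≤ (B *ᵥ (B *ᵥ v)) ⬝ᵥ (B *ᵥ v) := hBpsd (B *ᵥ v)
      have hprod : ((B *ᵥ v) ⬝ᵥ v) * ((B *ᵥ (B *ᵥ v)) ⬝ᵥ (B *ᵥ v))
          ≤ (ε^2 * (v ⬝ᵥ v)) * (ε^2 * ((B *ᵥ v) ⬝ᵥ (B *ᵥ v))) :=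
        mul_le_mul h1 h2 hs (mul_nonneg (sq_nonneg _) hvv)
      have hupos : 0 < (B *ᵥ v) ⬝ᵥ (B *ᵥ v) := lt_of_le_of_lt hK hcase
      have hmul := mul_lt_mul_of_pos_right hcase hupos
      nlinarith [hcs, hprod, hmul]
  -- transfer to M - WU
  have hfin : ∀ v : Fin k → ℝ,
      ((M - WU) *ᵥ v) ⬝ᵥ ((M - WU) *ᵥ v) = (B *ᵥ v) ⬝ᵥ (B *ᵥ v) := by
    intro v
    have hWUA : WU *ᵥ (A *ᵥ v) = M *ᵥ v := by
      rw [mulVec_mulVec, hA, ← Matrix.mul_assoc, hWUorth.1, Matrix.one_mul]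
    have hMW : (M - WU) *ᵥ v = -(WU *ᵥ (B *ᵥ v)) := by
      rw [hBapp, mulVec_sub, hWUA, sub_mulVec, neg_sub]
    rw [hMW, neg_dotProduct, dotProduct_neg, neg_neg, polarAux_orth_dot WU hWUorth.2]
  rw [hε] at *
  apply polarAux_opNorm_le_bound _ (sq_nonneg ε)
  intro v
  rw [hfin v]
  calc (B *ᵥ v) ⬝ᵥ (B *ᵥ v) ≤ (ε^2)^2 * (v ⬝ᵥ v) := hBnorm v
    _ = (ε^2)^2 * (v ⬝ᵥ v) := rfl
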